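/- There exists a constant C with 0 < C < 1 such that for all complex numbers z, z', ζ with |z| ≤ C|ζ| and |z'| ≤ C|ζ|, and for any choice of square roots, one has √|ζ| ≤ |√(z+ζ) − √(z'−ζ)| ≤ 2√|ζ|. -/

import Mathlib

lemma key_ineq (a b r : ℝ) (ha : 0 ≤ a) (hb : 0 ≤ b) (hr : 0 ≤ r)
    (hab : (15/8) * r ≤ a * b) (hsum : a ^ 2 + b ^ 2 ≤ (17/4) * r) :
    r ≤ a ^ 2 ∧ a ^ 2 ≤ 4 * r := by
  constructor
  · nlinarith [sq_nonneg (a*b), sq_nonneg (a^2 - r), mul_nonneg ha hb, sq_nonneg (a^2 - b^2),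
      mul_nonneg (mul_nonneg ha hb) hr, sq_nonneg r, sq_nonneg (a*b - 15/8*r)]
  · nlinarith [sq_nonneg (a*b), sq_nonneg (a^2 - 4*r), mul_nonneg ha hb, sq_nonneg (a^2 - b^2),
      mul_nonneg (mul_nonneg ha hb) hr, sq_nonneg (a*b - 15/8*r)]

/-- Wermer-type sets, Lemma 2.3: there is `0 < C < 1` such that for all complex
`z, z', ζ` with `|z|, |z'| ≤ C|ζ|` and every choice of square roots,
`√|ζ| ≤ |√(z+ζ) − √(z'−ζ)| ≤ 2√|ζ|`. -/
theorem exists_constant_sqrt_slope_estimate :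
    ∃ C : ℝ, 0 < C ∧ C < 1 ∧
      ∀ z z' ζ s t : ℂ, ‖z‖ ≤ C * ‖ζ‖ →
        ‖z'‖ ≤ C * ‖ζ‖ →
        s ^ 2 = z + ζ → t ^ 2 = z' - ζ →
        Real.sqrt (‖ζ‖) ≤ ‖s - t‖ ∧
          ‖s - t‖ ≤ 2 * Real.sqrt (‖ζ‖) := by
  refine ⟨1/16, by norm_num, by norm_num, ?_⟩
  intro z z' ζ s t hz hz' hs ht
  set r := ‖ζ‖ with hrdef
  have hr : 0 ≤ r := norm_nonneg ζ
  set a := ‖s - t‖ with hadef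
  set b := ‖s + t‖ with hbdef
  have ha : 0 ≤ a := norm_nonneg _
  have hb : 0 ≤ b := norm_nonneg _
  -- product lower bound
  have hprod : (s - t) * (s + t) = z - z' + 2 * ζ := by
    have : (s - t) * (s + t) = s ^ 2 - t ^ 2 := by ring
    rw [this, hs, ht]; ring
  have habm : a * b = ‖z - z' + 2 * ζ‖ := by
    rw [hadef, hbdef, ← norm_mul, hprod]
  have h2r : 2 * r ≤ ‖z - z' + 2 * ζ‖ + ‖z'‖ + ‖z‖ := by
    have h1 : ‖2 * ζ‖ ≤ ‖z - z' + 2 * ζ‖ + ‖z' - z‖ := by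
      have := norm_add_le (z - z' + 2 * ζ) (z' - z)
      simpa [show z - z' + 2 * ζ + (z' - z) = 2 * ζ by ring] using this
    have h2 : ‖z' - z‖ ≤ ‖z'‖ + ‖z‖ := by
      have := norm_add_le z' (-z)
      simpa [sub_eq_add_neg] using this
    have h3 : ‖2 * ζ‖ = 2 * r := by
      rw [norm_mul]; simp [hrdef]
    linarith
  have hab : (15/8) * r ≤ a * b := by
    rw [habm]; linarith
  -- sum of squares upper bound
  have hs2 : ‖s‖ ^ 2 ≤ (17/16) * r := by
    have : ‖s‖ ^ 2 = ‖z + ζ‖ := by rw [← norm_pow, hs]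
    rw [this]
    calc ‖z + ζ‖ ≤ ‖z‖ + r := norm_add_le z ζ
      _ ≤ (1/16) * r + r := by linarith
      _ = (17/16) * r := by ring
  have ht2 : ‖t‖ ^ 2 ≤ (17/16) * r := by
    have h0 : ‖t‖ ^ 2 = ‖z' - ζ‖ := by rw [← norm_pow, ht]
    have h1 : ‖z' - ζ‖ ≤ ‖z'‖ + r := by
      have := norm_add_le z' (-ζ)
      simpa [sub_eq_add_neg, hrdef] using this
    rw [h0]; linarith
  have hpar : a ^ 2 + b ^ 2 = 2 * ‖s‖ ^ 2 + 2 * ‖t‖ ^ 2 := by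
    rw [hadef, hbdef]
    simp only [Complex.sq_norm, Complex.normSq_apply, Complex.sub_re, Complex.sub_im,
      Complex.add_re, Complex.add_im]
    ring
  have hsum : a ^ 2 + b ^ 2 ≤ (17/4) * r := by
    rw [hpar]; linarith
  obtain ⟨hlow, hhigh⟩ := key_ineq a b r ha hb hr hab hsum
  constructor
  · have := Real.sqrt_le_sqrt hlow
    rwa [Real.sqrt_sq ha] at this
  · have h1 : a = Real.sqrt (a ^ 2) := (Real.sqrt_sq ha).symm
    have h2 : Real.sqrt (a ^ 2) ≤ Real.sqrt (4 * r) := Real.sqrt_le_sqrt hhigh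
    have h3 : Real.sqrt (4 * r) = 2 * Real.sqrt r := by
      rw [show (4:ℝ) = 2 ^ 2 by norm_num, Real.sqrt_mul (by positivity), Real.sqrt_sq (by norm_num : (0:ℝ) ≤ 2)]
    rw [h1]; rw [h3] at h2; exact h2
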